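/- Let T: X → X and S: Y → Y be homeomorphisms of compact metric spaces, π: X → Y a continuous surjection with π∘T = S∘π, and ν an ergodic S-invariant Borel probability measure on Y such that |π⁻¹(y)| = d for ν-a.e. y, where d ∈ ℕ is finite. Then the canonical lift ℓ_π(ν) is ergodic if and only if there is exactly one T-invariant Borel probability measure μ on X with πμ = ν, in which case ℓ_π(ν) is that unique invariant lift. -/

import Mathlib

open MeasureTheory Set Filter
open scoped ENNReal

lemma aux_absCont_eq {α : Type*} [MeasurableSpace α] {e : α → α}
    (he : MeasurableEmbedding e) (μ ν : Measure α)
    [IsProbabilityMeasure μ] [IsProbabilityMeasure ν]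
    (hμ : MeasurePreserving e μ μ) (hν : Ergodic e ν) (hac : μ ≪ ν) : μ = ν := by
  set g := μ.rnDeriv ν with hg
  have hgm : Measurable g := Measure.measurable_rnDeriv μ ν
  have hwd : ν.withDensity g = μ := Measure.withDensity_rnDeriv_eq μ ν hac
  have hint : ∫⁻ x, g x ∂ν ≠ ∞ := by
    rw [← setLIntegral_univ, ← withDensity_apply g MeasurableSet.univ, hwd]
    simp
  have hinv : ν.withDensity (g ∘ e) = μ := by
    ext A hA
    rw [withDensity_apply _ hA]
    have h1 : ∫⁻ a in A, g (e a) ∂ν = ∫⁻ b in e '' A, g b ∂ν :=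
      hν.toMeasurePreserving.setLIntegral_comp_emb he g A
    rw [show (∫⁻ a in A, (g ∘ e) a ∂ν) = ∫⁻ a in A, g (e a) ∂ν from rfl, h1,
      ← withDensity_apply g (he.measurableSet_image' hA), hwd]
    conv_lhs => rw [← hμ.map_eq]
    rw [Measure.map_apply hμ.measurable (he.measurableSet_image' hA),
      Set.preimage_image_eq _ he.injective]
  have hcomp : ∫⁻ x, (g ∘ e) x ∂ν ≠ ∞ := by
    have h2 : ∫⁻ a, g (e a) ∂ν = ∫⁻ b, g b ∂ν :=
      hν.toMeasurePreserving.lintegral_comp_emb he g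
    simpa [Function.comp, h2] using hint
  have haeq : g ∘ e =ᵐ[ν] g := by
    rw [← withDensity_eq_iff ((hgm.comp he.measurable).aemeasurable) hgm.aemeasurable]
    · rw [hinv, hwd]
    · exact hcomp
  obtain ⟨c, hc⟩ := hν.ae_eq_const_of_ae_eq_comp₀ hgm.nullMeasurable haeq
  have hμc : μ = c • ν := by
    rw [← hwd, withDensity_congr_ae hc]
    exact withDensity_const c
  have hc1 : c = 1 := by
    have h1 : μ Set.univ = 1 := measure_univ
    rw [hμc] at h1
    simpa using h1
  rw [hμc, hc1, one_smul]

/-- The canonical lift `ℓ_π(ν)` (defined by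
`ℓ(s) = (1/d) ∫ |π⁻¹(y) ∩ s| dν(y)`) is ergodic if and only if `ν` has exactly one
`T`-invariant lift; in that case the canonical lift is that unique invariant lift. -/
theorem canonical_lift_ergodic_iff_unique_lift
    {X Y : Type*} [MetricSpace X] [CompactSpace X] [MetricSpace Y] [CompactSpace Y]
    [MeasurableSpace X] [BorelSpace X] [MeasurableSpace Y] [BorelSpace Y]
    (T : X ≃ₜ X) (S : Y ≃ₜ Y) (π : X → Y)
    (hπc : Continuous π) (hπs : Function.Surjective π)
    (hcomm : π ∘ T = S ∘ π)
    (ν : Measure Y) [IsProbabilityMeasure ν] (hνerg : Ergodic S ν)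
    (d : ℕ) (hd : 0 < d) (hfib : ∀ᵐ y ∂ν, (π ⁻¹' {y}).encard = d)
    (ell : Measure X)
    (hell : ∀ s : Set X, MeasurableSet s →
      ell s = (∫⁻ y, ((π ⁻¹' {y} ∩ s).encard : ℝ≥0∞) ∂ν) / d) :
    (Ergodic T ell ↔
      ∃! μ : Measure X,
        IsProbabilityMeasure μ ∧ MeasurePreserving T μ μ ∧ μ.map π = ν) ∧
    (Ergodic T ell →
      (IsProbabilityMeasure ell ∧ MeasurePreserving T ell ell ∧ ell.map π = ν) ∧
      ∀ μ : Measure X, IsProbabilityMeasure μ → MeasurePreserving T μ μ →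
        μ.map π = ν → μ = ell) := by
  have hπm : Measurable π := hπc.measurable
  have hTm : Measurable (⇑T) := T.continuous.measurable
  have hSm : Measurable (⇑S) := S.continuous.measurable
  have hd0 : (d : ℝ≥0∞) ≠ 0 := by
    simpa using hd.ne'
  have hdt : (d : ℝ≥0∞) ≠ ∞ := ENNReal.natCast_ne_top d
  -- fibers are permuted by T
  have hfiber : ∀ y : Y, ⇑T '' (π ⁻¹' {y}) = π ⁻¹' {S y} := by
    intro y
    ext x
    simp only [Set.mem_image, Set.mem_preimage, Set.mem_singleton_iff]
    constructor
    · rintro ⟨z, hz, rfl⟩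
      have h2 := congrFun hcomm z
      simp only [Function.comp_apply] at h2
      rw [h2, hz]
    · intro h
      refine ⟨T.symm x, ?_, T.apply_symm_apply x⟩
      have h2 := congrFun hcomm (T.symm x)
      simp only [Function.comp_apply, Homeomorph.apply_symm_apply] at h2
      apply S.injective
      rw [← h2, h]
  have hkey : ∀ (y : Y) (A : Set X),
      ((π ⁻¹' {y} ∩ ⇑T ⁻¹' A).encard : ℝ≥0∞) = ((π ⁻¹' {S y} ∩ A).encard : ℝ≥0∞) := by
    intro y A
    have h2 : ⇑T '' (π ⁻¹' {y} ∩ ⇑T ⁻¹' A) = π ⁻¹' {S y} ∩ A := by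
      rw [Set.image_inter T.injective, hfiber, Set.image_preimage_eq A T.surjective]
    rw [← h2, T.injective.encard_image _]
  -- ell is a probability measure
  have hell_univ : ell Set.univ = 1 := by
    rw [hell Set.univ MeasurableSet.univ]
    have h1 : ∫⁻ y, ((π ⁻¹' {y} ∩ Set.univ).encard : ℝ≥0∞) ∂ν = d := by
      rw [lintegral_congr_ae (g := fun _ => (d : ℝ≥0∞)) ?_, lintegral_const, measure_univ,
        mul_one]
      filter_upwards [hfib] with y hy
      rw [Set.inter_univ, hy]; simp
    rw [h1, ENNReal.div_self hd0 hdt]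
  have F1 : IsProbabilityMeasure ell := ⟨hell_univ⟩
  -- ell projects to ν
  have F3 : ell.map π = ν := by
    ext B hB
    rw [Measure.map_apply hπm hB, hell _ (hB.preimage hπm)]
    have h1 : ∫⁻ y, ((π ⁻¹' {y} ∩ π ⁻¹' B).encard : ℝ≥0∞) ∂ν
        = ∫⁻ y, B.indicator (fun _ => (d : ℝ≥0∞)) y ∂ν := by
      apply lintegral_congr_ae
      filter_upwards [hfib] with y hy
      by_cases hyB : y ∈ B
      · have h2 : π ⁻¹' {y} ∩ π ⁻¹' B = π ⁻¹' {y} := by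
          apply Set.inter_eq_self_of_subset_left
          intro x hx
          simp only [Set.mem_preimage, Set.mem_singleton_iff] at hx
          simp [Set.mem_preimage, hx, hyB]
        rw [h2, hy, Set.indicator_of_mem hyB]; simp
      · have h2 : π ⁻¹' {y} ∩ π ⁻¹' B = ∅ := by
          ext x
          simp only [Set.mem_inter_iff, Set.mem_preimage, Set.mem_singleton_iff,
            Set.mem_empty_iff_false, iff_false, not_and]
          rintro rfl; exact hyB
        rw [h2, Set.indicator_of_notMem hyB]; simp
    rw [h1, lintegral_indicator hB _, setLIntegral_const, mul_comm, mul_div_assoc,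
      ENNReal.div_self hd0 hdt, mul_one]
  -- ell is T-invariant
  have hinv : ∀ A : Set X, MeasurableSet A → ell (⇑T ⁻¹' A) = ell A := by
    intro A hA
    rw [hell _ (hA.preimage hTm), hell A hA]
    congr 1
    have h1 : ∫⁻ y, ((π ⁻¹' {y} ∩ ⇑T ⁻¹' A).encard : ℝ≥0∞) ∂ν
        = ∫⁻ y, (fun z => ((π ⁻¹' {z} ∩ A).encard : ℝ≥0∞)) (S y) ∂ν :=
      lintegral_congr fun y => hkey y A
    rw [h1]
    exact hνerg.toMeasurePreserving.lintegral_comp_emb S.measurableEmbedding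
      (fun z => ((π ⁻¹' {z} ∩ A).encard : ℝ≥0∞))
  have F2 : MeasurePreserving (⇑T) ell ell := by
    refine ⟨hTm, ?_⟩
    ext A hA
    rw [Measure.map_apply hTm hA, hinv A hA]
  -- any lift is absolutely continuous wrt ell
  have F4 : ∀ μ : Measure X, IsProbabilityMeasure μ → μ.map π = ν → μ ≪ ell := by
    intro μ hμp hμπ
    refine Measure.AbsolutelyContinuous.mk (fun A hA hA0 => ?_)
    have hK : ∀ K : Set X, K ⊆ A → IsCompact K → μ K = 0 := by
      intro K hKA hKc
      have hKm : MeasurableSet (π '' K) := (hKc.image hπc).isClosed.measurableSet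
      have h1 : μ K ≤ ν (π '' K) := by
        calc μ K ≤ μ (π ⁻¹' (π '' K)) := measure_mono (Set.subset_preimage_image π K)
          _ = ν (π '' K) := by rw [← hμπ, Measure.map_apply hπm hKm]
      have h2 : ν (π '' K) ≤ ∫⁻ y, ((π ⁻¹' {y} ∩ K).encard : ℝ≥0∞) ∂ν := by
        rw [← lintegral_indicator_one hKm]
        refine lintegral_mono fun y => ?_
        by_cases hy : y ∈ π '' K
        · simp only [Set.indicator_of_mem hy, Pi.one_apply]
          obtain ⟨x, hxK, hxy⟩ := hy
          have h3 : (π ⁻¹' {y} ∩ K).Nonempty := ⟨x, by simp [hxy], hxK⟩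
          have h4 := Set.one_le_encard_iff_nonempty.mpr h3
          exact_mod_cast h4
        · simp only [Set.indicator_of_notMem hy]; exact zero_le
      have h3 : ∫⁻ y, ((π ⁻¹' {y} ∩ K).encard : ℝ≥0∞) ∂ν = ell K * d := by
        rw [hell K hKc.isClosed.measurableSet, ENNReal.div_mul_cancel hd0 hdt]
      have h4 : ell K = 0 :=
        le_antisymm (hA0 ▸ measure_mono hKA) zero_le
      have h5 : μ K ≤ 0 := by
        calc μ K ≤ ν (π '' K) := h1
          _ ≤ _ := h2
          _ = ell K * d := h3
          _ = 0 := by rw [h4, zero_mul]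
      exact le_antisymm h5 zero_le
    rw [hA.measure_eq_iSup_isCompact μ]
    simp only [ENNReal.iSup_eq_zero]
    intro K; exact fun hKA hKc => hK K hKA hKc
  -- uniqueness from ergodicity
  have huniq : Ergodic (⇑T) ell → ∀ μ : Measure X, IsProbabilityMeasure μ →
      MeasurePreserving (⇑T) μ μ → μ.map π = ν → μ = ell := by
    intro herg μ hμp hμT hμπ
    haveI := hμp
    exact aux_absCont_eq T.measurableEmbedding μ ell hμT herg (F4 μ hμp hμπ)
  -- ergodicity from uniqueness
  have hback : (∃! μ : Measure X,
      IsProbabilityMeasure μ ∧ MeasurePreserving (⇑T) μ μ ∧ μ.map π = ν) →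
      Ergodic (⇑T) ell := by
    intro h
    by_contra herg
    have h2 : ¬ ∀ s : Set X, MeasurableSet s → ⇑T ⁻¹' s = s →
        s =ᵐ[ell] (∅ : Set X) ∨ s =ᵐ[ell] Set.univ := fun H =>
      herg ⟨F2, ⟨fun s hs hfs => Filter.eventuallyConst_set'.mpr (H s hs hfs)⟩⟩
    push_neg at h2
    obtain ⟨s, hsm, hsinv, hs⟩ := h2
    obtain ⟨hs0, hs1⟩ := hs
    rw [ae_eq_empty] at hs0
    rw [ae_eq_univ] at hs1
    -- general construction of a lift from an invariant set
    have hgen : ∀ u : Set X, MeasurableSet u → ⇑T ⁻¹' u = u → ell u ≠ 0 →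
        IsProbabilityMeasure ((ell u)⁻¹ • ell.restrict u) ∧
        MeasurePreserving (⇑T) ((ell u)⁻¹ • ell.restrict u) ((ell u)⁻¹ • ell.restrict u) ∧
        ((ell u)⁻¹ • ell.restrict u).map π = ν := by
      intro u hum huinv hu0
      set μu : Measure X := (ell u)⁻¹ • ell.restrict u with hμu
      have hut : ell u ≠ ∞ := measure_ne_top ell u
      have hprob : IsProbabilityMeasure μu := by
        constructor
        rw [hμu, Measure.smul_apply, Measure.restrict_apply_univ, smul_eq_mul,
          ENNReal.inv_mul_cancel hu0 hut]
      have hmp : MeasurePreserving (⇑T) μu μu := by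
        refine ⟨hTm, ?_⟩
        ext A hA
        rw [Measure.map_apply hTm hA, hμu, Measure.smul_apply, Measure.smul_apply,
          Measure.restrict_apply hA, Measure.restrict_apply (hA.preimage hTm)]
        have h3 : ⇑T ⁻¹' A ∩ u = ⇑T ⁻¹' (A ∩ u) := by
          rw [Set.preimage_inter, huinv]
        rw [h3, hinv _ (hA.inter hum)]
      haveI := hprob
      refine ⟨hprob, hmp, ?_⟩
      haveI : IsProbabilityMeasure (μu.map π) := Measure.isProbabilityMeasure_map hπm.aemeasurable
      have hSinv : MeasurePreserving (⇑S) (μu.map π) (μu.map π) := by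
        refine ⟨hSm, ?_⟩
        rw [Measure.map_map hSm hπm, ← hcomm, ← Measure.map_map hπm hTm, hmp.map_eq]
      have hac : μu.map π ≪ ν := by
        refine Measure.AbsolutelyContinuous.mk (fun B hB hB0 => ?_)
        have h5 : (μu.map π) B ≤ (ell u)⁻¹ * ν B := by
          rw [Measure.map_apply hπm hB, hμu, Measure.smul_apply, smul_eq_mul,
            Measure.restrict_apply (hB.preimage hπm)]
          refine mul_le_mul_right ?_ _
          calc ell (π ⁻¹' B ∩ u) ≤ ell (π ⁻¹' B) := measure_mono Set.inter_subset_left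
            _ = ν B := by rw [← F3, Measure.map_apply hπm hB]
        rw [hB0, mul_zero] at h5
        exact le_antisymm h5 zero_le
      exact aux_absCont_eq S.measurableEmbedding (μu.map π) ν hSinv hνerg hac
    have hscinv : ⇑T ⁻¹' sᶜ = sᶜ := by rw [Set.preimage_compl, hsinv]
    obtain ⟨hp1, hm1, hl1⟩ := hgen s hsm hsinv hs0
    obtain ⟨hp2, hm2, hl2⟩ := hgen sᶜ hsm.compl hscinv hs1
    have heq : (ell s)⁻¹ • ell.restrict s = (ell sᶜ)⁻¹ • ell.restrict sᶜ := by
      obtain ⟨μ0, _, hμ0⟩ := h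
      rw [hμ0 _ ⟨hp1, hm1, hl1⟩, hμ0 _ ⟨hp2, hm2, hl2⟩]
    have hval : ((ell s)⁻¹ • ell.restrict s) s = 1 := by
      rw [Measure.smul_apply, Measure.restrict_apply hsm, Set.inter_self, smul_eq_mul,
        ENNReal.inv_mul_cancel hs0 (measure_ne_top ell s)]
    have hval2 : ((ell sᶜ)⁻¹ • ell.restrict sᶜ) s = 0 := by
      rw [Measure.smul_apply, Measure.restrict_apply hsm, smul_eq_mul,
        Set.inter_compl_self, measure_empty, mul_zero]
    rw [heq, hval2] at hval
    exact zero_ne_one hval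
  refine ⟨⟨fun herg => ⟨ell, ⟨F1, F2, F3⟩, fun μ hμ => huniq herg μ hμ.1 hμ.2.1 hμ.2.2⟩, hback⟩,
    fun herg => ⟨⟨F1, F2, F3⟩, fun μ h1 h2 h3 => huniq herg μ h1 h2 h3⟩⟩
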